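/- Let N ≥ 3, α ∈ (0,N), p = (N+α)/(N−2), q ∈ (2, 2N/(N−2)), and let A and c be the minimization constant (1.5) and the Nehari mountain-pass level respectively. Suppose {vₙ} ⊂ H¹_rad(ℝᴺ) is bounded, vₙ ⇀ 0 in H¹, H(vₙ) = 1 for all n, and C(vₙ) → 0. Then limsup ‖vₙ‖_{2*}² ≥ (2p/C₀)^{1/p}, and consequently ½ lim ‖∇vₙ‖₂² ≥ ½ S (2p/C₀)^{1/p}. -/

import Mathlib

open MeasureTheory

/-- Membership in `H¹(ℝᴺ)` for a plain function. -/
def MemH1 {N : ℕ} (u : EuclideanSpace ℝ (Fin N) → ℝ) : Prop :=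
  MemLp u 2 volume ∧ Differentiable ℝ u ∧ MemLp (fun x => gradient u x) 2 volume

/-- The normalization constant `C̄` of the Riesz potential `I_α`. -/
noncomputable def rieszConst (N : ℕ) (α : ℝ) : ℝ :=
  Real.Gamma (((N:ℝ) - α) / 2) / (Real.Gamma (α / 2) * Real.pi ^ ((N:ℝ) / 2) * 2 ^ α)

/-- The Dirichlet energy `A(u) = ∫ |∇u|²`. -/
noncomputable def dirichlet {N : ℕ} (u : EuclideanSpace ℝ (Fin N) → ℝ) : ℝ :=
  ∫ x : EuclideanSpace ℝ (Fin N), ‖gradient u x‖ ^ (2:ℕ)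

/-- `D(u) = ∫ |u|²`. -/
noncomputable def l2sq {N : ℕ} (u : EuclideanSpace ℝ (Fin N) → ℝ) : ℝ :=
  ∫ x : EuclideanSpace ℝ (Fin N), |u x| ^ (2:ℕ)

/-- The nonlocal term `B(u) = ∫ (I_α * |u|^p) |u|^p`. -/
noncomputable def nonlocalB (N : ℕ) (α p : ℝ) (u : EuclideanSpace ℝ (Fin N) → ℝ) : ℝ :=
  ∫ x : EuclideanSpace ℝ (Fin N), ∫ y : EuclideanSpace ℝ (Fin N),
    rieszConst N α * |u x| ^ p * |u y| ^ p * ‖x - y‖ ^ (α - (N:ℝ))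

/-- `C(u) = ∫ |u|^q`. -/
noncomputable def lqq {N : ℕ} (q : ℝ) (u : EuclideanSpace ℝ (Fin N) → ℝ) : ℝ :=
  ∫ x : EuclideanSpace ℝ (Fin N), |u x| ^ q

/-- Membership in the Nehari manifold `𝒩`. -/
def InNehari (N : ℕ) (α p q : ℝ) (u : EuclideanSpace ℝ (Fin N) → ℝ) : Prop :=
  MemH1 u ∧ ¬ (u =ᵐ[volume] (0 : EuclideanSpace ℝ (Fin N) → ℝ)) ∧
    dirichlet u + l2sq u = nonlocalB N α p u + lqq q u

/-- The energy functional `I`. -/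
noncomputable def energy (N : ℕ) (α p q : ℝ) (u : EuclideanSpace ℝ (Fin N) → ℝ) : ℝ :=
  (1 / 2) * (dirichlet u + l2sq u) - (1 / (2 * p)) * nonlocalB N α p u -
    (1 / q) * lqq q u

/-- The constraint functional `H(u) = (1/2p)B(u) + (1/q)C(u) − ½‖u‖₂²`. -/
noncomputable def constraintH (N : ℕ) (α p q : ℝ)
    (u : EuclideanSpace ℝ (Fin N) → ℝ) : ℝ :=
  (1 / (2 * p)) * nonlocalB N α p u + (1 / q) * lqq q u - (1 / 2) * l2sq u

/-- `‖u‖_{2*}²` where `2* = 2N/(N−2)`. -/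
noncomputable def l2starSq (N : ℕ) (u : EuclideanSpace ℝ (Fin N) → ℝ) : ℝ :=
  (∫ x : EuclideanSpace ℝ (Fin N), |u x| ^ (2 * (N:ℝ) / ((N:ℝ) - 2))) ^
    (((N:ℝ) - 2) / (N:ℝ))

open Filter in
/-- if `{vₙ} ⊂ H¹_rad` is bounded, `vₙ ⇀ 0` in `H¹`, `H(vₙ) = 1` and
`C(vₙ) → 0`, then `limsup ‖vₙ‖_{2*}² ≥ (2p/C₀)^{1/p}` and
`½ limsup ‖∇vₙ‖₂² ≥ ½ S (2p/C₀)^{1/p}`. -/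
theorem stmt_19 (N : ℕ) (hN : 3 ≤ N) (α : ℝ) (hα : α ∈ Set.Ioo (0:ℝ) N)
    (p : ℝ) (hp : p = ((N:ℝ) + α) / ((N:ℝ) - 2))
    (q : ℝ) (hq : 2 < q) (hq' : q < 2 * (N:ℝ) / ((N:ℝ) - 2))
    (C₀ S : ℝ) (hC₀ : 0 < C₀) (hS : 0 < S)
    -- `C₀` is the sharp Hardy–Littlewood–Sobolev constant: `B(v) ≤ C₀‖v‖_{2*}^{2p}`
    (hHLS : ∀ v : EuclideanSpace ℝ (Fin N) → ℝ, MemH1 v →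
      nonlocalB N α p v ≤ C₀ * l2starSq N v ^ p)
    -- `S` is the best Sobolev constant: `S‖v‖_{2*}² ≤ ‖∇v‖₂²`
    (hSob : ∀ v : EuclideanSpace ℝ (Fin N) → ℝ, MemH1 v →
      S * l2starSq N v ≤ dirichlet v)
    (v : ℕ → EuclideanSpace ℝ (Fin N) → ℝ)
    (hmem : ∀ n, MemH1 (v n))
    -- radial symmetry
    (hrad : ∀ n, ∀ x y : EuclideanSpace ℝ (Fin N), ‖x‖ = ‖y‖ → v n x = v n y)
    -- boundedness in `H¹`
    (hbdd : ∃ M : ℝ, ∀ n, dirichlet (v n) + l2sq (v n) ≤ M)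
    -- weak convergence `vₙ ⇀ 0` in `H¹`
    (hweak : ∀ φ : EuclideanSpace ℝ (Fin N) → ℝ, MemH1 φ →
      Tendsto (fun n => ∫ x : EuclideanSpace ℝ (Fin N),
        (inner ℝ (gradient (v n) x) (gradient φ x) : ℝ) + v n x * φ x) atTop (nhds 0))
    (hconstr : ∀ n, constraintH N α p q (v n) = 1)
    (hCq : Tendsto (fun n => lqq q (v n)) atTop (nhds 0)) :
    (2 * p / C₀) ^ (1 / p) ≤ limsup (fun n => l2starSq N (v n)) atTop ∧
      (1 / 2) * S * (2 * p / C₀) ^ (1 / p) ≤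
        (1 / 2) * limsup (fun n => dirichlet (v n)) atTop := by

  have hN2 : (0:ℝ) < (N:ℝ) - 2 := by
    have : (3:ℝ) ≤ (N:ℝ) := by exact_mod_cast hN
    linarith
  have hp0 : 0 < p := by
    rw [hp]; exact div_pos (by linarith [hα.1, hN2]) hN2
  have hq0 : (0:ℝ) < q := by linarith
  have hKb : (0:ℝ) < 2 * p / C₀ := div_pos (by linarith) hC₀
  set K : ℝ := (2 * p / C₀) ^ (1 / p) with hK
  have hLnn : ∀ n, 0 ≤ l2starSq N (v n) := by
    intro n
    apply Real.rpow_nonneg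
    exact integral_nonneg fun x => Real.rpow_nonneg (abs_nonneg _) _
  have hl2nn : ∀ n, 0 ≤ l2sq (v n) := by
    intro n
    exact integral_nonneg fun x => pow_nonneg (abs_nonneg _) _
  obtain ⟨M, hM⟩ := hbdd
  have hDle : ∀ n, dirichlet (v n) ≤ M := fun n => by linarith [hM n, hl2nn n]
  have hLle : ∀ n, l2starSq N (v n) ≤ M / S := by
    intro n
    have h1 := hSob (v n) (hmem n)
    rw [le_div_iff₀ hS]
    nlinarith [hDle n]
  have hLbdd : IsBoundedUnder (· ≤ ·) atTop fun n => l2starSq N (v n) :=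
    isBoundedUnder_of ⟨M / S, hLle⟩
  have hDbdd : IsBoundedUnder (· ≤ ·) atTop fun n => dirichlet (v n) :=
    isBoundedUnder_of ⟨M, hDle⟩
  have hKp : K ^ p = 2 * p / C₀ := by
    rw [hK, ← Real.rpow_mul hKb.le, one_div, inv_mul_cancel₀ hp0.ne', Real.rpow_one]
  have key : ∀ b : ℝ, b < K → ∀ᶠ n in atTop, b ≤ l2starSq N (v n) := by
    intro b hb
    rcases le_or_gt b 0 with hb0 | hb0
    · exact Eventually.of_forall fun n => le_trans hb0 (hLnn n)
    · have hbp : b ^ p < 2 * p / C₀ := by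
        rw [← hKp]; exact Real.rpow_lt_rpow hb0.le hb hp0
      set δ : ℝ := 2 * p / C₀ - b ^ p with hδ
      have hδ0 : 0 < δ := by simp only [hδ]; linarith
      have hev : ∀ᶠ n in atTop, |lqq q (v n)| < δ * q * C₀ / (2 * p) := by
        have := hCq
        rw [Metric.tendsto_atTop] at this
        obtain ⟨n₀, hn₀⟩ := this (δ * q * C₀ / (2 * p))
          (by positivity)
        filter_upwards [eventually_ge_atTop n₀] with n hn
        simpa [Real.dist_eq] using hn₀ n hn
      filter_upwards [hev] with n hn
      -- derive Lₙ^p ≥ b^p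
      have hB := hHLS (v n) (hmem n)
      have hE := hl2nn n
      have hCo := hconstr n
      unfold constraintH at hCo
      have hLp : b ^ p ≤ l2starSq N (v n) ^ p := by
        have habs := abs_lt.mp hn
        have h2p : (2 * p) ≠ 0 := by positivity
        have e1 : q * nonlocalB N α p (v n) + 2 * p * lqq q (v n)
            - p * q * l2sq (v n) = 2 * p * q := by
          field_simp at hCo
          linarith
        have h3 : 2 * p * lqq q (v n) < δ * q * C₀ := by
          have h := habs.2
          rw [lt_div_iff₀ (by positivity : (0:ℝ) < 2 * p)] at h
          linarith
        have h4 : δ * q * C₀ = 2 * p * q - b ^ p * (q * C₀) := by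
          rw [hδ]; field_simp
        nlinarith [mul_le_mul_of_nonneg_left hB hq0.le,
          mul_nonneg (mul_nonneg hp0.le hq0.le) hE, mul_pos hq0 hC₀]
      calc b = (b ^ p) ^ (1 / p) := by
              rw [← Real.rpow_mul hb0.le, mul_one_div, div_self hp0.ne', Real.rpow_one]
        _ ≤ (l2starSq N (v n) ^ p) ^ (1 / p) :=
              Real.rpow_le_rpow (Real.rpow_nonneg hb0.le _) hLp (by positivity)
        _ = l2starSq N (v n) := by
              rw [← Real.rpow_mul (hLnn n), mul_one_div, div_self hp0.ne', Real.rpow_one]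
  constructor
  · apply le_of_forall_lt_imp_le_of_dense
    intro b hb
    exact le_limsup_of_frequently_le ((key b hb).frequently) hLbdd
  · have hmain : S * K ≤ limsup (fun n => dirichlet (v n)) atTop := by
      apply le_of_forall_lt_imp_le_of_dense
      intro c hc
      have hb : c / S < K := (div_lt_iff₀' hS).mpr hc
      have hev := key (c / S) hb
      apply le_limsup_of_frequently_le _ hDbdd
      apply Eventually.frequently
      filter_upwards [hev] with n hn
      have h1 := hSob (v n) (hmem n)
      have : c ≤ S * l2starSq N (v n) := by
        rw [← div_le_iff₀' hS] at *
        exact hn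
      linarith
    nlinarith
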